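/- arXiv:1911.05200 — 2 statements merged into one kernel-verified Lean document; each statement's English description precedes it below -/
import Mathlib

section
/- Let d ≥ 1, r > 0, a ∈ ℝ^d, and let F : (0,r) → ℝ be measurable with ∫_{B_r} |ξ| |F(|ξ|)| dξ < ∞. Then ∫_{B_r} (a·ξ) (ξ/|ξ|) F(|ξ|) dξ = (a/d) ∫_{B_r} |ξ| F(|ξ|) dξ, where B_r ⊂ ℝ^d is the open ball of radius r centred at the origin. -/
open MeasureTheory Metric

section Aux

variable {d : ℕ}

private lemma abs_coord_le_norm (x : EuclideanSpace ℝ (Fin d)) (i : Fin d) :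
    |x i| ≤ ‖x‖ := by
  have h := PiLp.norm_sq_eq_of_L2 (fun _ : Fin d => ℝ) x
  have h2 : ‖x i‖ ^ 2 ≤ ‖x‖ ^ 2 := by
    rw [h]
    exact Finset.single_le_sum (f := fun j => ‖x j‖ ^ 2)
      (fun _ _ => sq_nonneg _) (Finset.mem_univ i)
  have := norm_nonneg x
  have := norm_nonneg (x i)
  have : ‖x i‖ ≤ ‖x‖ := by nlinarith
  simpa [Real.norm_eq_abs] using this

/-- Change of variables in a set integral over a ball under a linear isometry. -/
private lemma setIntegral_ball_comp_isometry (r : ℝ)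
    (L : EuclideanSpace ℝ (Fin d) ≃ₗᵢ[ℝ] EuclideanSpace ℝ (Fin d))
    (h : EuclideanSpace ℝ (Fin d) → ℝ) :
    ∫ ξ in ball (0 : EuclideanSpace ℝ (Fin d)) r, h (L ξ)
      = ∫ ξ in ball (0 : EuclideanSpace ℝ (Fin d)) r, h ξ := by
  have hpre : L ⁻¹' ball (0 : EuclideanSpace ℝ (Fin d)) r = ball 0 r := by
    ext x
    simp [mem_ball, dist_eq_norm, L.norm_map]
  have := L.measurePreserving.setIntegral_preimage_emb
    L.toHomeomorph.measurableEmbedding h (ball 0 r)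
  rwa [hpre] at this

end Aux

theorem integral_ball_mixed_moment (d : ℕ) (hd : 1 ≤ d) (r : ℝ) (hr : 0 < r)
    (a : EuclideanSpace ℝ (Fin d))
    (F : ℝ → ℝ) (hFmeas : Measurable F)
    (hFint : IntegrableOn (fun ξ : EuclideanSpace ℝ (Fin d) => ‖ξ‖ * |F ‖ξ‖|)
      (ball (0 : EuclideanSpace ℝ (Fin d)) r)) :
    ∫ ξ in ball (0 : EuclideanSpace ℝ (Fin d)) r,
        ((inner ℝ a ξ : ℝ) * F ‖ξ‖ / ‖ξ‖) • ξ =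
      ((d : ℝ)⁻¹ * ∫ ξ in ball (0 : EuclideanSpace ℝ (Fin d)) r, ‖ξ‖ * F ‖ξ‖) • a := by
  classical
  set g : EuclideanSpace ℝ (Fin d) → ℝ := fun ξ => F ‖ξ‖ / ‖ξ‖ with hg_def
  have hg_meas : Measurable g := (hFmeas.comp measurable_norm).div measurable_norm
  have hcoord_meas : ∀ i : Fin d,
      Measurable (fun ξ : EuclideanSpace ℝ (Fin d) => ξ i) := fun i =>
    (EuclideanSpace.proj (𝕜 := ℝ) i).continuous.measurable
  -- pointwise bound for the mixed second moments
  have hbound : ∀ (i j : Fin d) (ξ : EuclideanSpace ℝ (Fin d)),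
      |ξ i * ξ j * g ξ| ≤ ‖ξ‖ * |F ‖ξ‖| := by
    intro i j ξ
    rcases eq_or_ne ξ 0 with h0 | h0
    · subst h0
      simp [g]
    · have hξ : (0 : ℝ) < ‖ξ‖ := norm_pos_iff.mpr h0
      have h1 : |ξ i| ≤ ‖ξ‖ := abs_coord_le_norm ξ i
      have h2 : |ξ j| ≤ ‖ξ‖ := abs_coord_le_norm ξ j
      have : |ξ i * ξ j * g ξ| = |ξ i| * |ξ j| * (|F ‖ξ‖| / ‖ξ‖) := by
        rw [abs_mul, abs_mul, hg_def]
        simp [abs_div, abs_of_pos hξ]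
      rw [this]
      calc |ξ i| * |ξ j| * (|F ‖ξ‖| / ‖ξ‖)
          ≤ ‖ξ‖ * ‖ξ‖ * (|F ‖ξ‖| / ‖ξ‖) := by
            apply mul_le_mul_of_nonneg_right (mul_le_mul h1 h2 (abs_nonneg _) (norm_nonneg _))
            positivity
        _ = ‖ξ‖ * |F ‖ξ‖| := by field_simp
  -- integrability of the mixed second moments
  have hmom : ∀ i j : Fin d,
      IntegrableOn (fun ξ : EuclideanSpace ℝ (Fin d) => ξ i * ξ j * g ξ) (ball 0 r) := by
    intro i j
    refine hFint.mono' ?_ ?_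
    · exact (((hcoord_meas i).mul (hcoord_meas j)).mul hg_meas).aestronglyMeasurable
    · filter_upwards with ξ
      simpa only [Real.norm_eq_abs] using hbound i j ξ
  -- off-diagonal moments vanish
  have hzero : ∀ i j : Fin d, i ≠ j →
      (∫ ξ in ball (0 : EuclideanSpace ℝ (Fin d)) r, ξ i * ξ j * g ξ) = 0 := by
    intro i j hij
    set L : EuclideanSpace ℝ (Fin d) ≃ₗᵢ[ℝ] EuclideanSpace ℝ (Fin d) :=
      LinearIsometryEquiv.piLpCongrRight 2
        (fun k => if k = j then LinearIsometryEquiv.neg ℝ else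
          LinearIsometryEquiv.refl ℝ ℝ) with hL_def
    have hLapp : ∀ (ξ : EuclideanSpace ℝ (Fin d)) (k : Fin d),
        L ξ k = if k = j then -ξ k else ξ k := by
      intro ξ k
      rw [hL_def, LinearIsometryEquiv.piLpCongrRight_apply]
      by_cases hk : k = j
      · subst hk; simp
      · simp [hk]
    have key := setIntegral_ball_comp_isometry r L (fun ξ => ξ i * ξ j * g ξ)
    have hcomp : ∀ ξ : EuclideanSpace ℝ (Fin d),
        L ξ i * L ξ j * g (L ξ) = -(ξ i * ξ j * g ξ) := by
      intro ξ
      have hgL : g (L ξ) = g ξ := by simp [hg_def, L.norm_map]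
      rw [hLapp ξ i, hLapp ξ j, hgL, if_neg hij, if_pos rfl]
      ring
    rw [show (fun ξ : EuclideanSpace ℝ (Fin d) => L ξ i * L ξ j * g (L ξ))
        = fun ξ : EuclideanSpace ℝ (Fin d) => -(ξ i * ξ j * g ξ) from funext hcomp,
      integral_neg] at key
    linarith
  -- diagonal moments are all equal
  have hdiag : ∀ i j : Fin d,
      (∫ ξ in ball (0 : EuclideanSpace ℝ (Fin d)) r, ξ i * ξ i * g ξ)
        = ∫ ξ in ball (0 : EuclideanSpace ℝ (Fin d)) r, ξ j * ξ j * g ξ := by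
    intro i j
    set L : EuclideanSpace ℝ (Fin d) ≃ₗᵢ[ℝ] EuclideanSpace ℝ (Fin d) :=
      LinearIsometryEquiv.piLpCongrLeft 2 ℝ ℝ (Equiv.swap i j) with hL_def
    have key := setIntegral_ball_comp_isometry r L (fun ξ => ξ i * ξ i * g ξ)
    have hcomp : ∀ ξ : EuclideanSpace ℝ (Fin d),
        L ξ i * L ξ i * g (L ξ) = ξ j * ξ j * g ξ := by
      intro ξ
      have hgL : g (L ξ) = g ξ := by simp [hg_def, L.norm_map]
      have hLi : L ξ i = ξ j := by
        rw [hL_def, LinearIsometryEquiv.piLpCongrLeft_apply]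
        simp only [Equiv.piCongrLeft'_apply, Equiv.symm_swap]
        rw [Equiv.swap_apply_left]
      rw [hLi, hgL]
    rw [show (fun ξ : EuclideanSpace ℝ (Fin d) => L ξ i * L ξ i * g (L ξ))
        = fun ξ : EuclideanSpace ℝ (Fin d) => ξ j * ξ j * g ξ from funext hcomp] at key
    exact key.symm
  set S : ℝ := ∫ ξ in ball (0 : EuclideanSpace ℝ (Fin d)) r, ‖ξ‖ * F ‖ξ‖ with hS_def
  -- the sum of diagonal moments equals S
  have hsum : (∑ i : Fin d, ∫ ξ in ball (0 : EuclideanSpace ℝ (Fin d)) r, ξ i * ξ i * g ξ)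
      = S := by
    rw [← integral_finset_sum _ (fun i _ => hmom i i), hS_def]
    apply integral_congr_ae
    filter_upwards with ξ
    have hnorm : (∑ i : Fin d, ξ i * ξ i) = ‖ξ‖ ^ 2 := by
      rw [PiLp.norm_sq_eq_of_L2]
      apply Finset.sum_congr rfl
      intro k _
      simp [Real.norm_eq_abs, sq, abs_mul_abs_self]
    rw [show (∑ i : Fin d, ξ i * ξ i * g ξ) = (∑ i : Fin d, ξ i * ξ i) * g ξ from
      (Finset.sum_mul _ _ _).symm, hnorm]
    rcases eq_or_ne ξ 0 with h0 | h0
    · subst h0; simp [hg_def]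
    · have hξ : (0 : ℝ) < ‖ξ‖ := norm_pos_iff.mpr h0
      rw [hg_def]
      field_simp
  -- each diagonal moment equals S / d
  have hdval : ∀ i : Fin d,
      (∫ ξ in ball (0 : EuclideanSpace ℝ (Fin d)) r, ξ i * ξ i * g ξ) = (d : ℝ)⁻¹ * S := by
    intro i
    have hconst : (∑ j : Fin d, ∫ ξ in ball (0 : EuclideanSpace ℝ (Fin d)) r, ξ j * ξ j * g ξ)
        = (d : ℝ) * ∫ ξ in ball (0 : EuclideanSpace ℝ (Fin d)) r, ξ i * ξ i * g ξ := by
      rw [Finset.sum_congr rfl (fun j _ => (hdiag j i))]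
      simp [Finset.sum_const, nsmul_eq_mul]
    have hd0 : (d : ℝ) ≠ 0 := by positivity
    have := hsum
    rw [hconst] at this
    rw [← this, ← mul_assoc, inv_mul_cancel₀ hd0, one_mul]
  -- integrability of the vector-valued integrand
  have hΦmeas : Measurable (fun ξ : EuclideanSpace ℝ (Fin d) =>
      ((inner ℝ a ξ : ℝ) * F ‖ξ‖ / ‖ξ‖) • ξ) := by
    have hinner : Measurable (fun ξ : EuclideanSpace ℝ (Fin d) => (inner ℝ a ξ : ℝ)) :=
      (Continuous.inner continuous_const continuous_id).measurable
    exact (((hinner.mul (hFmeas.comp measurable_norm)).div measurable_norm).smul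
      measurable_id)
  have hΦint : IntegrableOn (fun ξ : EuclideanSpace ℝ (Fin d) =>
      ((inner ℝ a ξ : ℝ) * F ‖ξ‖ / ‖ξ‖) • ξ) (ball 0 r) := by
    refine (hFint.const_mul ‖a‖).mono' hΦmeas.aestronglyMeasurable ?_
    filter_upwards with ξ
    rcases eq_or_ne ξ 0 with h0 | h0
    · subst h0
      simp [norm_nonneg, mul_nonneg (norm_nonneg a)]
    · have hξ : (0 : ℝ) < ‖ξ‖ := norm_pos_iff.mpr h0
      have hI : |(inner ℝ a ξ : ℝ)| ≤ ‖a‖ * ‖ξ‖ := abs_real_inner_le_norm a ξ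
      rw [norm_smul]
      have : ‖(inner ℝ a ξ : ℝ) * F ‖ξ‖ / ‖ξ‖‖ = |(inner ℝ a ξ : ℝ)| * |F ‖ξ‖| / ‖ξ‖ := by
        rw [Real.norm_eq_abs, abs_div, abs_mul, abs_of_pos hξ]
      rw [this]
      calc |(inner ℝ a ξ : ℝ)| * |F ‖ξ‖| / ‖ξ‖ * ‖ξ‖
          = |(inner ℝ a ξ : ℝ)| * |F ‖ξ‖| := by field_simp
        _ ≤ ‖a‖ * ‖ξ‖ * |F ‖ξ‖| := by
            exact mul_le_mul_of_nonneg_right hI (abs_nonneg _)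
        _ = ‖a‖ * (‖ξ‖ * |F ‖ξ‖|) := by ring
  -- now compare coordinates
  refine PiLp.ext (fun i => ?_)
  have hproj := (EuclideanSpace.proj (𝕜 := ℝ) i).integral_comp_comm hΦint
  have hLHS : (∫ ξ in ball (0 : EuclideanSpace ℝ (Fin d)) r,
      ((inner ℝ a ξ : ℝ) * F ‖ξ‖ / ‖ξ‖) • ξ) i
      = ∫ ξ in ball (0 : EuclideanSpace ℝ (Fin d)) r,
          ((inner ℝ a ξ : ℝ) * F ‖ξ‖ / ‖ξ‖) * ξ i := by
    have h1 : (∫ ξ in ball (0 : EuclideanSpace ℝ (Fin d)) r,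
        ((inner ℝ a ξ : ℝ) * F ‖ξ‖ / ‖ξ‖) • ξ) i
        = EuclideanSpace.proj (𝕜 := ℝ) i (∫ ξ in ball (0 : EuclideanSpace ℝ (Fin d)) r,
            ((inner ℝ a ξ : ℝ) * F ‖ξ‖ / ‖ξ‖) • ξ) := rfl
    rw [h1, ← hproj]
    apply integral_congr_ae
    filter_upwards with ξ
    simp [smul_eq_mul]
  rw [show (((d : ℝ)⁻¹ * S) • a) i = ((d : ℝ)⁻¹ * S) * a i from rfl, hLHS]
  have hexpand : ∀ ξ : EuclideanSpace ℝ (Fin d),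
      ((inner ℝ a ξ : ℝ) * F ‖ξ‖ / ‖ξ‖) * ξ i = ∑ j : Fin d, a j * (ξ j * ξ i * g ξ) := by
    intro ξ
    rw [PiLp.inner_apply]
    simp only [RCLike.inner_apply, conj_trivial, hg_def]
    rw [Finset.sum_mul, Finset.sum_div, Finset.sum_mul]
    apply Finset.sum_congr rfl
    intro j _
    ring
  rw [show (fun ξ : EuclideanSpace ℝ (Fin d) => ((inner ℝ a ξ : ℝ) * F ‖ξ‖ / ‖ξ‖) * ξ i)
      = fun ξ : EuclideanSpace ℝ (Fin d) => ∑ j : Fin d, a j * (ξ j * ξ i * g ξ) from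
    funext hexpand]
  rw [integral_finset_sum _ (fun j _ => (hmom j i).const_mul (a j))]
  rw [Finset.sum_congr rfl (fun j _ => integral_const_mul (a j) _)]
  rw [Finset.sum_eq_single i]
  · rw [hdval i]; ring
  · intro j _ hji
    rw [hzero j i hji, mul_zero]
  · intro h; exact absurd (Finset.mem_univ i) h
end

section
/- Let d ≥ 1 and for each r > 0 let F_r : (0,r) → [0,∞) be measurable and satisfy the normalization ⨍_{B_r} |ξ| F_r(|ξ|) dξ = d·r. Let v : ℝ^d → ℝ be continuously differentiable and bounded. Then for every x ∈ ℝ^d, (T_r ∇v)(x) converges to ∇v(x) as r → 0⁺. -/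
open MeasureTheory Metric Filter

/-- The operator `(T_r ∇v)(x) = (1/r) ∫_0^1 ⨍_{B_r} (∇v(x+sξ)·ξ) (ξ/‖ξ‖) F_r(‖ξ‖) dξ ds`. -/
noncomputable def TgradOp (d : ℕ) (r : ℝ) (Fr : ℝ → ℝ)
    (v : EuclideanSpace ℝ (Fin d) → ℝ) (x : EuclideanSpace ℝ (Fin d)) :
    EuclideanSpace ℝ (Fin d) :=
  r⁻¹ • ∫ s in (0:ℝ)..1,
    ⨍ ξ in ball (0 : EuclideanSpace ℝ (Fin d)) r,
      ((inner ℝ (gradient v (x + s • ξ)) ξ : ℝ) * Fr ‖ξ‖ / ‖ξ‖) • ξ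

section Aux

section A
variable {d : ℕ}

local notation "E'" => EuclideanSpace ℝ (Fin d)

noncomputable def negC (d : ℕ) (i : Fin d) :
    EuclideanSpace ℝ (Fin d) ≃ₗᵢ[ℝ] EuclideanSpace ℝ (Fin d) :=
  LinearIsometryEquiv.piLpCongrRight 2
    (fun k => if k = i then LinearIsometryEquiv.neg ℝ else LinearIsometryEquiv.refl ℝ ℝ)

lemma negC_apply (i k : Fin d) (ξ : E') :
    negC d i ξ k = if k = i then -ξ k else ξ k := by
  simp only [negC, LinearIsometryEquiv.piLpCongrRight_apply]
  by_cases h : k = i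
  · subst h; simp
  · simp [h]

noncomputable def swapC (d : ℕ) (i j : Fin d) :
    EuclideanSpace ℝ (Fin d) ≃ₗᵢ[ℝ] EuclideanSpace ℝ (Fin d) :=
  LinearIsometryEquiv.piLpCongrLeft 2 ℝ ℝ (Equiv.swap i j)

lemma swapC_apply (i j k : Fin d) (ξ : E') :
    swapC d i j ξ k = ξ (Equiv.swap i j k) := by
  simp [swapC, LinearIsometryEquiv.piLpCongrLeft_apply, Equiv.piCongrLeft'_apply]

lemma preim_ball (e : E' ≃ₗᵢ[ℝ] E') (r : ℝ) :
    ⇑e ⁻¹' ball (0 : E') r = ball 0 r := by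
  ext ξ
  simp [mem_ball_zero_iff, e.norm_map]

lemma integral_comp_isometry {α : Type*} [NormedAddCommGroup α] [NormedSpace ℝ α]
    (e : E' ≃ₗᵢ[ℝ] E') (g : E' → α) (r : ℝ) :
    ∫ ξ in ball (0 : E') r, g (e ξ) = ∫ ξ in ball (0 : E') r, g ξ := by
  have h := (e.measurePreserving).setIntegral_preimage_emb
    e.toHomeomorph.measurableEmbedding g (ball 0 r)
  rwa [preim_ball] at h

lemma coord_abs_le_norm (ξ : E') (i : Fin d) : |ξ i| ≤ ‖ξ‖ := by
  rw [EuclideanSpace.norm_eq]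
  have h1 : |ξ i| = Real.sqrt (‖ξ i‖ ^ 2) := by rw [Real.sqrt_sq_eq_abs]; simp
  rw [h1]
  apply Real.sqrt_le_sqrt
  exact Finset.single_le_sum (f := fun j => ‖ξ j‖^2) (fun j _ => by positivity) (Finset.mem_univ i)

-- measurability of coordinate function
lemma coord_measurable (i : Fin d) : Measurable (fun ξ : E' => ξ i) :=
  (EuclideanSpace.proj (𝕜 := ℝ) i).continuous.measurable

variable {r : ℝ} {f : ℝ → ℝ}

lemma ae_ne_zero (hd : 1 ≤ d) :
    ∀ᵐ ξ ∂(volume.restrict (ball (0:E') r)), ξ ≠ 0 := by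
  have : Nonempty (Fin d) := ⟨⟨0, hd⟩⟩
  refine ae_restrict_of_ae ?_
  have hs : {ξ : E' | ¬ ξ ≠ 0} = {0} := by ext; simp
  rw [ae_iff, hs]
  exact measure_singleton 0

lemma ae_f_nonneg (hd : 1 ≤ d) (hfnn : ∀ ρ ∈ Set.Ioo 0 r, 0 ≤ f ρ) :
    ∀ᵐ ξ ∂(volume.restrict (ball (0:E') r)), 0 ≤ f ‖ξ‖ := by
  filter_upwards [ae_ne_zero hd, ae_restrict_mem measurableSet_ball] with ξ hne hmem
  exact hfnn _ ⟨norm_pos_iff.mpr hne, mem_ball_zero_iff.mp hmem⟩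

lemma hInt_abs (hd : 1 ≤ d) (hfnn : ∀ ρ ∈ Set.Ioo 0 r, 0 ≤ f ρ)
    (hInt : Integrable (fun ξ : E' => ‖ξ‖ * f ‖ξ‖) (volume.restrict (ball 0 r))) :
    Integrable (fun ξ : E' => ‖ξ‖ * |f ‖ξ‖|) (volume.restrict (ball 0 r)) :=
  hInt.congr ((ae_f_nonneg hd hfnn).mono fun ξ h => by simp [abs_of_nonneg h])

lemma int_coeff (hd : 1 ≤ d) (hf : Measurable f) (hfnn : ∀ ρ ∈ Set.Ioo 0 r, 0 ≤ f ρ)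
    (hInt : Integrable (fun ξ : E' => ‖ξ‖ * f ‖ξ‖) (volume.restrict (ball 0 r)))
    (i k : Fin d) :
    Integrable (fun ξ : E' => (ξ i * ξ k / ‖ξ‖) * f ‖ξ‖) (volume.restrict (ball 0 r)) := by
  refine (hInt_abs hd hfnn hInt).mono' ?_ ?_
  · exact ((((coord_measurable i).mul (coord_measurable k)).div measurable_norm).mul
      (hf.comp measurable_norm)).aestronglyMeasurable
  · filter_upwards with ξ
    rw [Real.norm_eq_abs, abs_mul]
    have hmain : |ξ i * ξ k / ‖ξ‖| ≤ ‖ξ‖ := by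
      rcases eq_or_ne ξ 0 with h0 | h0
      · simp [h0]
      · have hn : 0 < ‖ξ‖ := norm_pos_iff.mpr h0
        rw [abs_div, abs_of_nonneg hn.le, div_le_iff₀ hn, abs_mul]
        exact mul_le_mul (coord_abs_le_norm ξ i) (coord_abs_le_norm ξ k) (abs_nonneg _) (norm_nonneg _)
    exact mul_le_mul_of_nonneg_right hmain (abs_nonneg _)

lemma offdiag (hf : Measurable f) {i k : Fin d} (hik : i ≠ k) :
    ∫ ξ in ball (0:E') r, (ξ i * ξ k / ‖ξ‖) * f ‖ξ‖ = 0 := by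
  have h := integral_comp_isometry (negC d i) (fun ξ => (ξ i * ξ k / ‖ξ‖) * f ‖ξ‖) r
  have h2 : (fun ξ : E' => ((negC d i ξ) i * (negC d i ξ) k / ‖negC d i ξ‖) * f ‖negC d i ξ‖)
      = fun ξ : E' => -((ξ i * ξ k / ‖ξ‖) * f ‖ξ‖) := by
    funext ξ
    rw [negC_apply, negC_apply, (negC d i).norm_map, if_pos rfl, if_neg (Ne.symm hik)]
    ring
  rw [h2, integral_neg] at h
  linarith

lemma diag_eq (hf : Measurable f) (i k : Fin d) :
    ∫ ξ in ball (0:E') r, (ξ i * ξ i / ‖ξ‖) * f ‖ξ‖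
      = ∫ ξ in ball (0:E') r, (ξ k * ξ k / ‖ξ‖) * f ‖ξ‖ := by
  have h := integral_comp_isometry (swapC d i k) (fun ξ => (ξ i * ξ i / ‖ξ‖) * f ‖ξ‖) r
  have h2 : (fun ξ : E' => ((swapC d i k ξ) i * (swapC d i k ξ) i / ‖swapC d i k ξ‖) * f ‖swapC d i k ξ‖)
      = fun ξ : E' => (ξ k * ξ k / ‖ξ‖) * f ‖ξ‖ := by
    funext ξ
    rw [swapC_apply, (swapC d i k).norm_map, Equiv.swap_apply_left]
  rw [h2] at h
  exact h.symm

lemma sum_sq_coord (ξ : E') : ∑ k : Fin d, ξ k * ξ k = ‖ξ‖ ^ 2 := by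
  have := @real_inner_self_eq_norm_sq (EuclideanSpace ℝ (Fin d)) _ _ ξ
  rw [← this, PiLp.inner_apply]
  rfl

lemma diag_val (hd : 1 ≤ d) (hf : Measurable f) (hfnn : ∀ ρ ∈ Set.Ioo 0 r, 0 ≤ f ρ)
    (hInt : Integrable (fun ξ : E' => ‖ξ‖ * f ‖ξ‖) (volume.restrict (ball 0 r)))
    (i : Fin d) :
    (d : ℝ) * ∫ ξ in ball (0:E') r, (ξ i * ξ i / ‖ξ‖) * f ‖ξ‖
      = ∫ ξ in ball (0:E') r, ‖ξ‖ * f ‖ξ‖ := by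
  have hsum : ∑ k : Fin d, ∫ ξ in ball (0:E') r, (ξ k * ξ k / ‖ξ‖) * f ‖ξ‖
      = ∫ ξ in ball (0:E') r, ∑ k : Fin d, (ξ k * ξ k / ‖ξ‖) * f ‖ξ‖ :=
    (integral_finset_sum _ (fun k _ => int_coeff hd hf hfnn hInt k k)).symm
  have hpt : (fun ξ : E' => ∑ k : Fin d, (ξ k * ξ k / ‖ξ‖) * f ‖ξ‖)
      = fun ξ : E' => ‖ξ‖ * f ‖ξ‖ := by
    funext ξ
    rw [← Finset.sum_mul, ← Finset.sum_div, sum_sq_coord]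
    rcases eq_or_ne ξ 0 with h0 | h0
    · simp [h0]
    · have hn : ‖ξ‖ ≠ 0 := norm_ne_zero_iff.mpr h0
      field_simp
  have hconst : ∀ k : Fin d, ∫ ξ in ball (0:E') r, (ξ k * ξ k / ‖ξ‖) * f ‖ξ‖
      = ∫ ξ in ball (0:E') r, (ξ i * ξ i / ‖ξ‖) * f ‖ξ‖ := fun k => diag_eq hf k i
  calc (d : ℝ) * ∫ ξ in ball (0:E') r, (ξ i * ξ i / ‖ξ‖) * f ‖ξ‖
      = ∑ k : Fin d, ∫ ξ in ball (0:E') r, (ξ k * ξ k / ‖ξ‖) * f ‖ξ‖ := by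
        rw [Finset.sum_congr rfl (fun k _ => hconst k), Finset.sum_const, Finset.card_univ,
          Fintype.card_fin, nsmul_eq_mul]
    _ = _ := by rw [hsum, hpt]


-- ae bound for the vector integrand
lemma bound_ae (hd : 1 ≤ d) (hfnn : ∀ ρ ∈ Set.Ioo 0 r, 0 ≤ f ρ)
    (g : E' → E') (C : ℝ) (hC : ∀ ξ ∈ ball (0:E') r, ‖g ξ‖ ≤ C) :
    ∀ᵐ ξ ∂(volume.restrict (ball (0:E') r)),
      ‖((inner ℝ (g ξ) ξ : ℝ) * f ‖ξ‖ / ‖ξ‖) • ξ‖ ≤ C * (‖ξ‖ * |f ‖ξ‖|) := by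
  filter_upwards [ae_restrict_mem measurableSet_ball] with ξ hmem
  rcases eq_or_ne ξ 0 with h0 | h0
  · simp [h0]
  · have hn : 0 < ‖ξ‖ := norm_pos_iff.mpr h0
    have hC0 : 0 ≤ C := le_trans (norm_nonneg _) (hC ξ hmem)
    rw [norm_smul, Real.norm_eq_abs, abs_div, abs_mul, abs_of_nonneg hn.le,
      div_mul_eq_mul_div, mul_div_assoc, div_self hn.ne', mul_one]
    calc |(inner ℝ (g ξ) ξ : ℝ)| * |f ‖ξ‖| ≤ (C * ‖ξ‖) * |f ‖ξ‖| := by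
          apply mul_le_mul_of_nonneg_right _ (abs_nonneg _)
          calc |(inner ℝ (g ξ) ξ : ℝ)| ≤ ‖g ξ‖ * ‖ξ‖ := abs_real_inner_le_norm _ _
          _ ≤ C * ‖ξ‖ := mul_le_mul_of_nonneg_right (hC ξ hmem) hn.le
      _ = C * (‖ξ‖ * |f ‖ξ‖|) := by ring

lemma meas_vec (hf : Measurable f) (g : E' → E') (hg : Continuous g) :
    AEStronglyMeasurable (fun ξ : E' => ((inner ℝ (g ξ) ξ : ℝ) * f ‖ξ‖ / ‖ξ‖) • ξ)
      (volume.restrict (ball (0:E') r)) := by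
  have h1 : Measurable fun ξ : E' => (inner ℝ (g ξ) ξ : ℝ) :=
    (hg.inner continuous_id).measurable
  exact (((h1.mul (hf.comp measurable_norm)).div measurable_norm).smul
    measurable_id).aestronglyMeasurable

lemma int_vec (hd : 1 ≤ d) (hf : Measurable f) (hfnn : ∀ ρ ∈ Set.Ioo 0 r, 0 ≤ f ρ)
    (hInt : Integrable (fun ξ : E' => ‖ξ‖ * f ‖ξ‖) (volume.restrict (ball 0 r)))
    (g : E' → E') (hg : Continuous g) (C : ℝ) (hC : ∀ ξ ∈ ball (0:E') r, ‖g ξ‖ ≤ C) :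
    Integrable (fun ξ : E' => ((inner ℝ (g ξ) ξ : ℝ) * f ‖ξ‖ / ‖ξ‖) • ξ)
      (volume.restrict (ball 0 r)) :=
  Integrable.mono' ((hInt_abs hd hfnn hInt).const_mul C) (meas_vec hf g hg)
    (bound_ae hd hfnn g C hC)

lemma key_identity (hd : 1 ≤ d) (hf : Measurable f) (hfnn : ∀ ρ ∈ Set.Ioo 0 r, 0 ≤ f ρ)
    (hInt : Integrable (fun ξ : E' => ‖ξ‖ * f ‖ξ‖) (volume.restrict (ball 0 r)))
    (a : E') :
    ∫ ξ in ball (0:E') r, ((inner ℝ a ξ : ℝ) * f ‖ξ‖ / ‖ξ‖) • ξ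
      = ((d:ℝ)⁻¹ * ∫ ξ in ball (0:E') r, ‖ξ‖ * f ‖ξ‖) • a := by
  have hdne : (d:ℝ) ≠ 0 := by
    have : (0:ℝ) < d := by exact_mod_cast Nat.lt_of_lt_of_le Nat.zero_lt_one hd
    exact this.ne'
  have hIa : Integrable (fun ξ : E' => ((inner ℝ a ξ : ℝ) * f ‖ξ‖ / ‖ξ‖) • ξ)
      (volume.restrict (ball 0 r)) :=
    int_vec hd hf hfnn hInt (fun _ => a) continuous_const ‖a‖ (fun _ _ => le_rfl)
  refine PiLp.ext fun k => ?_
  have hproj : (∫ ξ in ball (0:E') r, ((inner ℝ a ξ : ℝ) * f ‖ξ‖ / ‖ξ‖) • ξ) k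
      = ∫ ξ in ball (0:E') r, ((inner ℝ a ξ : ℝ) * f ‖ξ‖ / ‖ξ‖) * ξ k := by
    have := (EuclideanSpace.proj (𝕜 := ℝ) k).integral_comp_comm hIa
    exact this.symm
  have hexp : (fun ξ : E' => ((inner ℝ a ξ : ℝ) * f ‖ξ‖ / ‖ξ‖) * ξ k)
      = fun ξ : E' => ∑ i : Fin d, a i * ((ξ i * ξ k / ‖ξ‖) * f ‖ξ‖) := by
    funext ξ
    have hinner : (inner ℝ a ξ : ℝ) = ∑ i, a i * ξ i := by rw [PiLp.inner_apply]; exact Finset.sum_congr rfl fun i _ => by simp [mul_comm]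
    rw [hinner, Finset.sum_mul, Finset.sum_div, Finset.sum_mul]
    refine Finset.sum_congr rfl fun i _ => ?_
    ring
  have hsum : ∫ ξ in ball (0:E') r, ((inner ℝ a ξ : ℝ) * f ‖ξ‖ / ‖ξ‖) * ξ k
      = ∑ i : Fin d, a i * ∫ ξ in ball (0:E') r, (ξ i * ξ k / ‖ξ‖) * f ‖ξ‖ := by
    rw [hexp, integral_finset_sum _ (fun i _ => (int_coeff hd hf hfnn hInt i k).const_mul (a i))]
    exact Finset.sum_congr rfl fun i _ => integral_const_mul _ _
  have hdiagval : ∫ ξ in ball (0:E') r, (ξ k * ξ k / ‖ξ‖) * f ‖ξ‖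
      = (d:ℝ)⁻¹ * ∫ ξ in ball (0:E') r, ‖ξ‖ * f ‖ξ‖ := by
    have h := diag_val hd hf hfnn hInt k
    rw [← h, ← mul_assoc, inv_mul_cancel₀ hdne, one_mul]
  have hsingle : ∑ i : Fin d, a i * ∫ ξ in ball (0:E') r, (ξ i * ξ k / ‖ξ‖) * f ‖ξ‖
      = a k * ((d:ℝ)⁻¹ * ∫ ξ in ball (0:E') r, ‖ξ‖ * f ‖ξ‖) := by
    rw [Finset.sum_eq_single k]
    · rw [hdiagval]
    · intro i _ hik
      rw [offdiag hf hik, mul_zero]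
    · intro h
      exact absurd (Finset.mem_univ k) h
  have hRHS : (((d:ℝ)⁻¹ * ∫ ξ in ball (0:E') r, ‖ξ‖ * f ‖ξ‖) • a) k
      = ((d:ℝ)⁻¹ * ∫ ξ in ball (0:E') r, ‖ξ‖ * f ‖ξ‖) * a k := rfl
  rw [hproj, hsum, hsingle, hRHS, mul_comm]

end A


section Main
theorem TgradOp_tendsto_gradient (d : ℕ) (hd : 1 ≤ d)
    (F : ℝ → ℝ → ℝ) (hFmeas : ∀ r > 0, Measurable (F r))
    (hFnonneg : ∀ r > 0, ∀ ρ ∈ Set.Ioo 0 r, 0 ≤ F r ρ)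
    (hFnorm : ∀ r > 0,
      ⨍ ξ in ball (0 : EuclideanSpace ℝ (Fin d)) r, ‖ξ‖ * F r ‖ξ‖ = d * r)
    (v : EuclideanSpace ℝ (Fin d) → ℝ)
    (hv : ContDiff ℝ 1 v) (hvb : ∃ C, ∀ y, |v y| ≤ C)
    (x : EuclideanSpace ℝ (Fin d)) :
    Tendsto (fun r => TgradOp d r (F r) v x) (nhdsWithin 0 (Set.Ioi 0))
      (nhds (gradient v x)) := by
  classical
  have hdR : (0:ℝ) < d := by exact_mod_cast Nat.lt_of_lt_of_le Nat.zero_lt_one hd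
  have hne : Nonempty (Fin d) := ⟨⟨0, hd⟩⟩
  have hGcont : Continuous (gradient v) := by
    have h1 : Continuous (fderiv ℝ v) := hv.continuous_fderiv one_ne_zero
    exact (LinearIsometryEquiv.continuous _).comp h1
  rw [Metric.tendsto_nhdsWithin_nhds]
  intro ε hε
  set κ := ε / (2 * ((d:ℝ) + 1)) with hκdef
  have hκpos : 0 < κ := by positivity
  obtain ⟨δ₁, hδ₁pos, hδ₁⟩ := Metric.continuousAt_iff.mp (hGcont.continuousAt (x := x)) κ hκpos
  refine ⟨δ₁, hδ₁pos, ?_⟩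
  intro r hr hrd
  have hrpos : 0 < r := hr
  have hrδ : r < δ₁ := by
    rw [Real.dist_eq, sub_zero, abs_of_pos hrpos] at hrd; exact hrd
  have hf : Measurable (F r) := hFmeas r hrpos
  have hfnn : ∀ ρ ∈ Set.Ioo 0 r, 0 ≤ F r ρ := hFnonneg r hrpos
  set B := ball (0 : EuclideanSpace ℝ (Fin d)) r with hBdef
  have hInt : Integrable (fun ξ : EuclideanSpace ℝ (Fin d) => ‖ξ‖ * F r ‖ξ‖)
      (volume.restrict B) := by
    by_contra h
    have hn := hFnorm r hrpos
    rw [setAverage_eq, integral_undef h, smul_zero] at hn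
    exact (by positivity : (0:ℝ) < (d:ℝ) * r).ne hn
  set V := (volume B).toReal with hVdef
  have hV : 0 < V :=
    ENNReal.toReal_pos (measure_ball_pos volume 0 hrpos).ne' measure_ball_lt_top.ne
  have hnormInt : ∫ ξ in B, ‖ξ‖ * F r ‖ξ‖ = (d:ℝ) * r * V := by
    have hn := hFnorm r hrpos
    rw [setAverage_eq, smul_eq_mul] at hn
    have h2 : V * (V⁻¹ * ∫ ξ in B, ‖ξ‖ * F r ‖ξ‖) = V * ((d:ℝ) * r) := congrArg (fun t => V * t) hn
    rw [← mul_assoc, mul_inv_cancel₀ hV.ne', one_mul] at h2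
    rw [h2]; ring
  obtain ⟨C, hC⟩ :=
    (isCompact_closedBall x r).exists_bound_of_continuousOn hGcont.continuousOn
  have hmem : ∀ s ∈ Set.Icc (0:ℝ) 1, ∀ ξ ∈ B, x + s • ξ ∈ closedBall x r := by
    intro s hs ξ hξ
    rw [mem_closedBall, dist_eq_norm, add_sub_cancel_left, norm_smul, Real.norm_eq_abs,
      abs_of_nonneg hs.1]
    have h1 : ‖ξ‖ < r := mem_ball_zero_iff.mp hξ
    nlinarith [norm_nonneg ξ, hs.2, hs.1]
  have hg_cont : ∀ s : ℝ, Continuous (fun ξ : EuclideanSpace ℝ (Fin d) =>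
      gradient v (x + s • ξ)) :=
    fun s => hGcont.comp (continuous_const.add (continuous_const_smul s))
  have hΦint : ∀ s ∈ Set.Icc (0:ℝ) 1,
      Integrable (fun ξ : EuclideanSpace ℝ (Fin d) =>
        ((inner ℝ (gradient v (x + s • ξ)) ξ : ℝ) * F r ‖ξ‖ / ‖ξ‖) • ξ) (volume.restrict B) :=
    fun s hs => int_vec hd hf hfnn hInt _ (hg_cont s) C (fun ξ hξ => hC _ (hmem s hs ξ hξ))
  have hkey : ∫ ξ in B, ((inner ℝ (gradient v x) ξ : ℝ) * F r ‖ξ‖ / ‖ξ‖) • ξ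
      = (r * V) • gradient v x := by
    rw [key_identity hd hf hfnn hInt, hnormInt]
    congr 1
    field_simp
  have habs_eq : ∫ ξ in B, ‖ξ‖ * |F r ‖ξ‖| = (d:ℝ) * r * V := by
    have habs_ae : (fun ξ : EuclideanSpace ℝ (Fin d) => ‖ξ‖ * |F r ‖ξ‖|)
        =ᵐ[volume.restrict B] fun ξ => ‖ξ‖ * F r ‖ξ‖ :=
      (ae_f_nonneg hd hfnn).mono fun ξ h => by simp [abs_of_nonneg h]
    rw [integral_congr_ae habs_ae]
    exact hnormInt
  have hest : ∀ s ∈ Set.Icc (0:ℝ) 1,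
      ‖(∫ ξ in B, ((inner ℝ (gradient v (x + s • ξ)) ξ : ℝ) * F r ‖ξ‖ / ‖ξ‖) • ξ)
        - (r * V) • gradient v x‖ ≤ κ * ((d:ℝ) * r * V) := by
    intro s hs
    have hIx : Integrable (fun ξ : EuclideanSpace ℝ (Fin d) =>
        ((inner ℝ (gradient v x) ξ : ℝ) * F r ‖ξ‖ / ‖ξ‖) • ξ) (volume.restrict B) :=
      int_vec hd hf hfnn hInt _ continuous_const ‖gradient v x‖ (fun _ _ => le_rfl)
    rw [← hkey, ← integral_sub (hΦint s hs) hIx]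
    have hCκ : ∀ ξ ∈ B, ‖gradient v (x + s • ξ) - gradient v x‖ ≤ κ := by
      intro ξ hξ
      have hdlt : dist (x + s • ξ) x < δ₁ :=
        lt_of_le_of_lt (mem_closedBall.mp (hmem s hs ξ hξ)) hrδ
      have := hδ₁ hdlt
      rw [dist_eq_norm] at this
      exact this.le
    have hbd := bound_ae hd hfnn (fun ξ => gradient v (x + s • ξ) - gradient v x) κ hCκ
    refine le_trans (norm_integral_le_of_norm_le ((hInt_abs hd hfnn hInt).const_mul κ) ?_) ?_
    · filter_upwards [hbd] with ξ h
      rw [inner_sub_left, sub_mul, sub_div, sub_smul] at h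
      exact h
    · rw [integral_const_mul, habs_eq]
  have hJcont : ContinuousOn (fun s : ℝ => ∫ ξ in B,
      ((inner ℝ (gradient v (x + s • ξ)) ξ : ℝ) * F r ‖ξ‖ / ‖ξ‖) • ξ) (Set.Icc 0 1) := by
    refine continuousOn_of_dominated (bound := fun ξ => C * (‖ξ‖ * |F r ‖ξ‖|)) ?_ ?_ ?_ ?_
    · intro s _; exact meas_vec hf _ (hg_cont s)
    · intro s hs; exact bound_ae hd hfnn _ C (fun ξ hξ => hC _ (hmem s hs ξ hξ))
    · exact (hInt_abs hd hfnn hInt).const_mul C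
    · filter_upwards with ξ
      apply Continuous.continuousOn
      have hc1 : Continuous fun s : ℝ => (inner ℝ (gradient v (x + s • ξ)) ξ : ℝ) :=
        (hGcont.comp (continuous_const.add (continuous_id.smul continuous_const))).inner
          continuous_const
      exact ((hc1.mul continuous_const).div_const _).smul continuous_const
  have hAint : IntervalIntegrable (fun s : ℝ => ⨍ ξ in B,
      ((inner ℝ (gradient v (x + s • ξ)) ξ : ℝ) * F r ‖ξ‖ / ‖ξ‖) • ξ) volume 0 1 := by
    apply ContinuousOn.intervalIntegrable
    rw [Set.uIcc_of_le zero_le_one]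
    refine ContinuousOn.congr (hJcont.const_smul V⁻¹) ?_
    intro s _
    simp only [setAverage_eq, hVdef, measureReal_def, Pi.smul_apply]
  have hA_est : ∀ s ∈ Set.uIoc (0:ℝ) 1,
      ‖(⨍ ξ in B, ((inner ℝ (gradient v (x + s • ξ)) ξ : ℝ) * F r ‖ξ‖ / ‖ξ‖) • ξ)
        - r • gradient v x‖ ≤ κ * ((d:ℝ) * r) := by
    intro s hs
    have hsIcc : s ∈ Set.Icc (0:ℝ) 1 := by
      rw [Set.uIoc_of_le zero_le_one] at hs; exact ⟨hs.1.le, hs.2⟩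
    rw [setAverage_eq, measureReal_def]
    have heq : (volume B).toReal⁻¹ •
          (∫ ξ in B, ((inner ℝ (gradient v (x + s • ξ)) ξ : ℝ) * F r ‖ξ‖ / ‖ξ‖) • ξ)
          - r • gradient v x
        = V⁻¹ • ((∫ ξ in B, ((inner ℝ (gradient v (x + s • ξ)) ξ : ℝ) * F r ‖ξ‖ / ‖ξ‖) • ξ)
          - (r * V) • gradient v x) := by
      rw [smul_sub, smul_smul, ← hVdef]
      congr 2
      field_simp
    rw [heq, norm_smul, Real.norm_eq_abs, abs_of_nonneg (inv_nonneg.mpr hV.le)]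
    calc V⁻¹ * ‖(∫ ξ in B, ((inner ℝ (gradient v (x + s • ξ)) ξ : ℝ) * F r ‖ξ‖ / ‖ξ‖) • ξ)
          - (r * V) • gradient v x‖ ≤ V⁻¹ * (κ * ((d:ℝ) * r * V)) :=
        mul_le_mul_of_nonneg_left (hest s hsIcc) (inv_nonneg.mpr hV.le)
      _ = κ * ((d:ℝ) * r) := by field_simp
  have hT : TgradOp d r (F r) v x = r⁻¹ • ∫ s in (0:ℝ)..1,
      ⨍ ξ in B, ((inner ℝ (gradient v (x + s • ξ)) ξ : ℝ) * F r ‖ξ‖ / ‖ξ‖) • ξ := rfl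
  have hsub : TgradOp d r (F r) v x - gradient v x
      = r⁻¹ • ∫ s in (0:ℝ)..1,
          ((⨍ ξ in B, ((inner ℝ (gradient v (x + s • ξ)) ξ : ℝ) * F r ‖ξ‖ / ‖ξ‖) • ξ)
            - r • gradient v x) := by
    rw [intervalIntegral.integral_sub hAint intervalIntegrable_const,
      intervalIntegral.integral_const, hT, smul_sub]
    congr 1
    rw [sub_zero, one_smul, smul_smul, inv_mul_cancel₀ hrpos.ne', one_smul]
  rw [dist_eq_norm]
  have hnormle : ‖TgradOp d r (F r) v x - gradient v x‖ ≤ r⁻¹ * (κ * ((d:ℝ) * r) * |1 - 0|) := by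
    rw [hsub, norm_smul, Real.norm_eq_abs, abs_of_nonneg (inv_nonneg.mpr hrpos.le)]
    exact mul_le_mul_of_nonneg_left
      (intervalIntegral.norm_integral_le_of_norm_le_const hA_est)
      (inv_nonneg.mpr hrpos.le)
  have hval : r⁻¹ * (κ * ((d:ℝ) * r) * |1 - 0|) = κ * d := by
    rw [sub_zero, abs_one, mul_one]
    field_simp
  have hfinal : κ * d < ε := by
    have h2 : (0:ℝ) < 2 * ((d:ℝ) + 1) := by positivity
    rw [hκdef, div_mul_eq_mul_div, div_lt_iff₀ h2]
    nlinarith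
  calc ‖TgradOp d r (F r) v x - gradient v x‖ ≤ r⁻¹ * (κ * ((d:ℝ) * r) * |1 - 0|) := hnormle
    _ = κ * d := hval
    _ < ε := hfinal
end Main
end Aux
end
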